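/- Let R be a commutative ring, α a type, s a finite subset of α, m : α → ℕ, x : α → R, and k ∈ ℕ. Let μ be the multiset over R obtained by taking, for each c ∈ s, the element x_c with multiplicity m_c (i.e., μ = Σ_{c ∈ s} replicate (m_c) (x_c)). Then the k-th elementary symmetric function of μ, e_k(μ) := Σ over all sub-multisets of μ of cardinality k of the product of their elements, satisfies e_k(μ) = Σ_q Π_{c ∈ s} C(m_c, q_c) · x_c^{q_c}, where the sum ranges over all q : α → ℕ with q_c ≤ m_c for every c ∈ s, q vanishing outside s, and Σ_{c ∈ s} q_c = k, and C(m_c, q_c) is the binomial coefficient. -/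

import Mathlib

section aux
variable {R : Type*} [CommRing R]

private lemma esymm_zero' (t : Multiset R) : t.esymm 0 = 1 := by
  simp [Multiset.esymm]

private lemma esymm_nil (k : ℕ) : (0 : Multiset R).esymm k = if k = 0 then 1 else 0 := by
  cases k <;> simp [Multiset.esymm, Multiset.powersetCard_zero_right]

private lemma esymm_cons_succ (a : R) (t : Multiset R) (k : ℕ) :
    (a ::ₘ t).esymm (k+1) = t.esymm (k+1) + a * t.esymm k := by
  rw [Multiset.esymm, Multiset.esymm, Multiset.esymm, Multiset.powersetCard_cons,
    Multiset.map_add, Multiset.sum_add, Multiset.map_map]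
  congr 1
  rw [← Multiset.sum_map_mul_left]
  exact congrArg _ (Multiset.map_congr rfl fun u _ => by simp)

private lemma esymm_replicate (n : ℕ) (a : R) (k : ℕ) :
    (Multiset.replicate n a).esymm k = n.choose k * a ^ k := by
  induction n generalizing k with
  | zero => cases k <;> simp [esymm_nil]
  | succ n ih =>
    cases k with
    | zero => simp [esymm_zero']
    | succ k =>
      rw [Multiset.replicate_succ, esymm_cons_succ, ih, ih, Nat.choose_succ_succ,
        Nat.cast_add, add_mul, pow_succ]
      ring

private lemma esymm_add (u v : Multiset R) (k : ℕ) :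
    (u + v).esymm k = ∑ p ∈ Finset.HasAntidiagonal.antidiagonal k, u.esymm p.1 * v.esymm p.2 := by
  induction u using Multiset.induction generalizing k with
  | empty =>
    rw [zero_add, Finset.sum_eq_single (0, k)]
    · simp [esymm_zero']
    · rintro ⟨p1, p2⟩ hp hne
      rw [Finset.HasAntidiagonal.mem_antidiagonal] at hp
      have : p1 ≠ 0 := fun h => hne (by simp [h, ← hp, Prod.ext_iff])
      simp [esymm_nil, this]
    · intro h
      exact absurd (by simp) h
  | cons a u ih =>
    cases k with
    | zero => simp [esymm_zero']
    | succ k =>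
      rw [Multiset.cons_add, esymm_cons_succ, ih, ih, Finset.Nat.sum_antidiagonal_succ,
        Finset.Nat.sum_antidiagonal_succ, esymm_zero', esymm_zero', Finset.mul_sum,
        add_assoc, ← Finset.sum_add_distrib]
      congr 1
      refine Finset.sum_congr rfl fun p _ => ?_
      rw [esymm_cons_succ]
      ring
end aux

/-- expansion of elementary symmetric functions of a multiset with
multiplicities (used in Example 4.14 of the paper). For the multiset `μ` taking
each `x c` (`c ∈ s`) with multiplicity `m c`, the `k`-th elementary symmetric
function `e_k(μ) = ∑_{ν ⊆ μ, |ν| = k} ∏ ν` equals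
`∑_{q ≤ m, support q ⊆ s, ∑ q = k} ∏_c C(m_c, q_c) x_c^{q_c}`. -/
theorem stmt_18 {R α : Type*} [CommRing R] [DecidableEq α]
    (s : Finset α) (m : α → ℕ) (x : α → R) (k : ℕ) :
    Multiset.esymm (∑ c ∈ s, Multiset.replicate (m c) (x c)) k =
      ∑ q ∈ (Finset.piAntidiag s k).filter (fun q => ∀ c ∈ s, q c ≤ m c),
        ∏ c ∈ s, ((m c).choose (q c) : R) * x c ^ q c := by
  classical
  induction s using Finset.cons_induction generalizing k with
  | empty =>
    rw [Finset.sum_empty, esymm_nil, Finset.piAntidiag_empty]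
    split_ifs with h
    · subst h; simp
    · simp
  | cons i s hi ih =>
    rw [Finset.sum_cons, esymm_add, Finset.piAntidiag_cons hi, Finset.sum_filter,
      Finset.sum_disjiUnion]
    refine Finset.sum_congr rfl fun p hp => ?_
    rw [esymm_replicate, ih p.2, Finset.sum_filter, Finset.sum_map, Finset.mul_sum]
    refine Finset.sum_congr rfl fun f hf => ?_
    rw [Finset.mem_piAntidiag] at hf
    have hfi : f i = 0 := by
      by_contra h
      exact hi (hf.2 i h)
    simp only [addRightEmbedding_apply, Pi.add_apply]
    by_cases hpm : p.1 ≤ m i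
    · by_cases h : ∀ c ∈ s, f c ≤ m c
      · rw [if_pos h, if_pos, Finset.prod_cons, if_pos rfl, hfi, zero_add]
        · congr 1
          refine (Finset.prod_congr rfl fun c hc => ?_).symm
          have hci : c ≠ i := fun hcc => hi (hcc ▸ hc)
          rw [if_neg hci, add_zero]
        · rintro c hc
          rcases Finset.mem_cons.1 hc with rfl | hc'
          · rw [hfi, if_pos rfl, zero_add]; exact hpm
          · have hci : c ≠ i := fun hcc => hi (hcc ▸ hc')
            rw [if_neg hci, add_zero]; exact h c hc'
      · rw [if_neg h, mul_zero, if_neg]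
        intro hcon
        refine h fun c hc => ?_
        have hci : c ≠ i := fun hcc => hi (hcc ▸ hc)
        have := hcon c (Finset.mem_cons_of_mem hc)
        rwa [if_neg hci, add_zero] at this
    · rw [Nat.choose_eq_zero_of_lt (lt_of_not_ge hpm), Nat.cast_zero, zero_mul, zero_mul,
        if_neg]
      intro hcon
      have := hcon i (Finset.mem_cons_self i s)
      rw [hfi, if_pos rfl, zero_add] at this
      exact hpm this
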